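/- For every (t, x) ∈ [0, T) × (0, ∞), the Black–Scholes European put value V_E satisfies the Black–Scholes partial differential equation: ∂_t V_E(t,x) + (1/2) σ² x² ∂²_{xx} V_E(t,x) + ρ x ∂_x V_E(t,x) − ρ V_E(t,x) = 0. -/

import Mathlib

open MeasureTheory

/-- Standard normal cumulative distribution function. -/
noncomputable def stdNormCDF (y : ℝ) : ℝ :=
  (Real.sqrt (2 * Real.pi))⁻¹ * ∫ z in Set.Iic y, Real.exp (-z ^ 2 / 2)

/-- `d₊(t,x)` in the Black–Scholes formula. -/
noncomputable def dPlus (ρ σ Γ T t x : ℝ) : ℝ :=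
  (Real.log (x / Γ) + (ρ + σ ^ 2 / 2) * (T - t)) / (σ * Real.sqrt (T - t))

/-- `d₋(t,x)` in the Black–Scholes formula. -/
noncomputable def dMinus (ρ σ Γ T t x : ℝ) : ℝ :=
  (Real.log (x / Γ) + (ρ - σ ^ 2 / 2) * (T - t)) / (σ * Real.sqrt (T - t))

/-- Black–Scholes value of a European put with strike `Γ` and maturity `T`. -/
noncomputable def euroPut (ρ σ Γ T t x : ℝ) : ℝ :=
  Γ * Real.exp (-ρ * (T - t)) * stdNormCDF (-(dMinus ρ σ Γ T t x))
    - x * stdNormCDF (-(dPlus ρ σ Γ T t x))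

lemma gauss_integrable : Integrable (fun z : ℝ => Real.exp (-z ^ 2 / 2)) := by
  have h := integrable_exp_neg_mul_sq (by norm_num : (0:ℝ) < 1/2)
  have he : (fun z : ℝ => Real.exp (-z ^ 2 / 2)) = fun z => Real.exp (-(1/2) * z ^ 2) := by
    funext z; congr 1; ring
  rw [he]; exact h

lemma hasDerivAt_stdNormCDF (y : ℝ) :
    HasDerivAt stdNormCDF ((Real.sqrt (2 * Real.pi))⁻¹ * Real.exp (-y ^ 2 / 2)) y := by
  have hint := gauss_integrable
  have hc : Continuous fun z : ℝ => Real.exp (-z ^ 2 / 2) := by continuity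
  have heq : stdNormCDF = fun w => (Real.sqrt (2 * Real.pi))⁻¹ *
      ((∫ z in Set.Iic (0:ℝ), Real.exp (-z ^ 2 / 2)) + ∫ z in (0:ℝ)..w, Real.exp (-z ^ 2 / 2)) := by
    funext w
    unfold stdNormCDF
    rw [← intervalIntegral.integral_Iic_sub_Iic hint.integrableOn hint.integrableOn]
    ring
  rw [heq]
  have hd : HasDerivAt (fun w => ∫ z in (0:ℝ)..w, Real.exp (-z ^ 2 / 2))
      (Real.exp (-y ^ 2 / 2)) y :=
    intervalIntegral.integral_hasDerivAt_right hint.intervalIntegrable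
      hc.stronglyMeasurable.stronglyMeasurableAtFilter hc.continuousAt
  exact (hd.const_add _).const_mul _
lemma key_identity (ρ σ Γ T t y : ℝ) (hσ : 0 < σ) (hΓ : 0 < Γ) (hτ : 0 < T - t) (hy : 0 < y) :
    Γ * Real.exp (-ρ * (T - t)) * Real.exp (-(dMinus ρ σ Γ T t y) ^ 2 / 2)
      = y * Real.exp (-(dPlus ρ σ Γ T t y) ^ 2 / 2) := by
  set q := Real.sqrt (T - t) with hqdef
  have hq0 : 0 < q := Real.sqrt_pos.2 hτ
  have hq2 : q ^ 2 = T - t := Real.sq_sqrt hτ.le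
  have hs : σ * q ≠ 0 := by positivity
  have h1 : dPlus ρ σ Γ T t y * (σ * q) = Real.log (y / Γ) + (ρ + σ ^ 2 / 2) * (T - t) := by
    simp only [dPlus, ← hqdef]; field_simp
  have h2 : dMinus ρ σ Γ T t y * (σ * q) = Real.log (y / Γ) + (ρ - σ ^ 2 / 2) * (T - t) := by
    simp only [dMinus, ← hqdef]; field_simp
  have h3 : (dPlus ρ σ Γ T t y - dMinus ρ σ Γ T t y) * (σ * q) = (σ * q) * (σ * q) := by
    linear_combination h1 - h2 - σ ^ 2 * hq2
  have h4 : dMinus ρ σ Γ T t y = dPlus ρ σ Γ T t y - σ * q := by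
    have := mul_right_cancel₀ hs h3
    linarith
  have hsq : (dMinus ρ σ Γ T t y) ^ 2
      = (dPlus ρ σ Γ T t y) ^ 2 - 2 * (Real.log (y / Γ) + ρ * (T - t)) := by
    rw [h4]; linear_combination (-2) * h1 + σ ^ 2 * hq2
  rw [hsq, show -((dPlus ρ σ Γ T t y) ^ 2 - 2 * (Real.log (y / Γ) + ρ * (T - t))) / 2
      = Real.log (y / Γ) + ρ * (T - t) + -(dPlus ρ σ Γ T t y) ^ 2 / 2 from by ring,
    Real.exp_add, Real.exp_add, Real.exp_log (by positivity)]
  have hee : Real.exp (-ρ * (T - t)) * Real.exp (ρ * (T - t)) = 1 := by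
    rw [← Real.exp_add]; norm_num
  rw [neg_mul] at hee ⊢
  field_simp
  linear_combination hee

lemma hasDerivAt_d_space (ρ σ Γ T t a y : ℝ) (hΓ : 0 < Γ) (hy : 0 < y) :
    HasDerivAt (fun z => (Real.log (z / Γ) + a * (T - t)) / (σ * Real.sqrt (T - t)))
      (1 / y / (σ * Real.sqrt (T - t))) y := by
  have h1 : HasDerivAt (fun z : ℝ => z / Γ) (1 / Γ) y := (hasDerivAt_id y).div_const Γ
  have h2 : HasDerivAt (fun z => Real.log (z / Γ)) ((y / Γ)⁻¹ * (1 / Γ)) y :=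
    (Real.hasDerivAt_log (by positivity)).comp y h1
  have h3 := (h2.add_const (a * (T - t))).div_const (σ * Real.sqrt (T - t))
  convert h3 using 2
  case e'_4 => rfl
  case e'_5 => rfl
  field_simp

lemma hasDerivAt_dPlus_space (ρ σ Γ T t y : ℝ) (hΓ : 0 < Γ) (hy : 0 < y) :
    HasDerivAt (fun z => dPlus ρ σ Γ T t z) (1 / y / (σ * Real.sqrt (T - t))) y := by
  simp only [dPlus]; exact hasDerivAt_d_space ρ σ Γ T t _ y hΓ hy

lemma hasDerivAt_dMinus_space (ρ σ Γ T t y : ℝ) (hΓ : 0 < Γ) (hy : 0 < y) :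
    HasDerivAt (fun z => dMinus ρ σ Γ T t z) (1 / y / (σ * Real.sqrt (T - t))) y := by
  simp only [dMinus]; exact hasDerivAt_d_space ρ σ Γ T t _ y hΓ hy

lemma hasDerivAt_euroPut_space (ρ σ Γ T t y : ℝ) (hσ : 0 < σ) (hΓ : 0 < Γ)
    (hτ : 0 < T - t) (hy : 0 < y) :
    HasDerivAt (fun z => euroPut ρ σ Γ T t z) (-stdNormCDF (-(dPlus ρ σ Γ T t y))) y := by
  have hq0 : 0 < Real.sqrt (T - t) := Real.sqrt_pos.2 hτ
  have hdp := hasDerivAt_dPlus_space ρ σ Γ T t y hΓ hy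
  have hdm := hasDerivAt_dMinus_space ρ σ Γ T t y hΓ hy
  have hNp : HasDerivAt (fun z => stdNormCDF (-(dPlus ρ σ Γ T t z)))
      ((Real.sqrt (2 * Real.pi))⁻¹ * Real.exp (-(-(dPlus ρ σ Γ T t y)) ^ 2 / 2)
        * (-(1 / y / (σ * Real.sqrt (T - t))))) y :=
    (hasDerivAt_stdNormCDF _).comp y hdp.neg
  have hNm : HasDerivAt (fun z => stdNormCDF (-(dMinus ρ σ Γ T t z)))
      ((Real.sqrt (2 * Real.pi))⁻¹ * Real.exp (-(-(dMinus ρ σ Γ T t y)) ^ 2 / 2)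
        * (-(1 / y / (σ * Real.sqrt (T - t))))) y :=
    (hasDerivAt_stdNormCDF _).comp y hdm.neg
  have h1 := hNm.const_mul (Γ * Real.exp (-ρ * (T - t)))
  have h2 := (hasDerivAt_id y).mul hNp
  have h3 := h1.sub h2
  have hfn : (fun z => euroPut ρ σ Γ T t z)
      = fun z => Γ * Real.exp (-ρ * (T - t)) * stdNormCDF (-(dMinus ρ σ Γ T t z))
        - z * stdNormCDF (-(dPlus ρ σ Γ T t z)) := rfl
  rw [hfn]
  convert h3 using 1
  case e'_4 => rfl
  case e'_5 => rfl
  case e'_8 => rfl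
  simp only [neg_sq, id_eq, one_mul]
  have key := key_identity ρ σ Γ T t y hσ hΓ hτ hy
  linear_combination ((Real.sqrt (2 * Real.pi))⁻¹ * (1 / y / (σ * Real.sqrt (T - t)))) * key

lemma hasDerivAt_d_time (ρ σ Γ T t x a : ℝ) (hσ : 0 < σ) (hτ : 0 < T - t) :
    HasDerivAt (fun s => (Real.log (x / Γ) + a * (T - s)) / (σ * Real.sqrt (T - s)))
      ((Real.log (x / Γ) - a * (T - t)) / (2 * σ * Real.sqrt (T - t) ^ 3)) t := by
  have hq0 : 0 < Real.sqrt (T - t) := Real.sqrt_pos.2 hτ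
  have hτd : HasDerivAt (fun s : ℝ => T - s) (-1) t := (hasDerivAt_id t).const_sub T
  have hsq : HasDerivAt (fun s => Real.sqrt (T - s))
      (1 / (2 * Real.sqrt (T - t)) * (-1)) t :=
    (Real.hasDerivAt_sqrt hτ.ne').comp t hτd
  have hden : HasDerivAt (fun s => σ * Real.sqrt (T - s))
      (σ * (1 / (2 * Real.sqrt (T - t)) * (-1))) t := hsq.const_mul σ
  have hnum : HasDerivAt (fun s => Real.log (x / Γ) + a * (T - s)) (a * -1) t :=
    (hτd.const_mul a).const_add _
  have h := hnum.div hden (by positivity)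
  convert h using 1
  case e'_4 => rfl
  case e'_5 => rfl
  case e'_8 => rfl
  set q := Real.sqrt (T - t) with hqdef
  have hq2 : q ^ 2 = T - t := Real.sq_sqrt hτ.le
  rw [← hq2]
  field_simp
  ring

lemma hasDerivAt_euroPut_time (ρ σ Γ T t x : ℝ) (hσ : 0 < σ) (hΓ : 0 < Γ)
    (hτ : 0 < T - t) (hx : 0 < x) :
    HasDerivAt (fun s => euroPut ρ σ Γ T s x)
      (ρ * Γ * Real.exp (-ρ * (T - t)) * stdNormCDF (-(dMinus ρ σ Γ T t x))
        - Γ * Real.exp (-ρ * (T - t))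
            * ((Real.sqrt (2 * Real.pi))⁻¹ * Real.exp (-(dMinus ρ σ Γ T t x) ^ 2 / 2))
            * ((Real.log (x / Γ) - (ρ - σ ^ 2 / 2) * (T - t)) / (2 * σ * Real.sqrt (T - t) ^ 3))
        + x * ((Real.sqrt (2 * Real.pi))⁻¹ * Real.exp (-(dPlus ρ σ Γ T t x) ^ 2 / 2))
            * ((Real.log (x / Γ) - (ρ + σ ^ 2 / 2) * (T - t)) / (2 * σ * Real.sqrt (T - t) ^ 3))) t := by
  have hτd : HasDerivAt (fun s : ℝ => T - s) (-1) t := (hasDerivAt_id t).const_sub T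
  have hE : HasDerivAt (fun s => Γ * Real.exp (-ρ * (T - s)))
      (Γ * (Real.exp (-ρ * (T - t)) * (-ρ * -1))) t := ((hτd.const_mul (-ρ)).exp).const_mul Γ
  have hdm := hasDerivAt_d_time ρ σ Γ T t x (ρ - σ ^ 2 / 2) hσ hτ
  have hdp := hasDerivAt_d_time ρ σ Γ T t x (ρ + σ ^ 2 / 2) hσ hτ
  have hNm : HasDerivAt (fun s => stdNormCDF (-(dMinus ρ σ Γ T s x)))
      ((Real.sqrt (2 * Real.pi))⁻¹ * Real.exp (-(-(dMinus ρ σ Γ T t x)) ^ 2 / 2)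
        * (-((Real.log (x / Γ) - (ρ - σ ^ 2 / 2) * (T - t)) / (2 * σ * Real.sqrt (T - t) ^ 3)))) t :=
    (hasDerivAt_stdNormCDF _).comp t hdm.neg
  have hNp : HasDerivAt (fun s => stdNormCDF (-(dPlus ρ σ Γ T s x)))
      ((Real.sqrt (2 * Real.pi))⁻¹ * Real.exp (-(-(dPlus ρ σ Γ T t x)) ^ 2 / 2)
        * (-((Real.log (x / Γ) - (ρ + σ ^ 2 / 2) * (T - t)) / (2 * σ * Real.sqrt (T - t) ^ 3)))) t :=
    (hasDerivAt_stdNormCDF _).comp t hdp.neg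
  have h1 := hE.mul hNm
  have h2 := hNp.const_mul x
  have h3 := h1.sub h2
  have hfn : (fun s => euroPut ρ σ Γ T s x)
      = fun s => (Γ * Real.exp (-ρ * (T - s))) * stdNormCDF (-(dMinus ρ σ Γ T s x))
        - x * stdNormCDF (-(dPlus ρ σ Γ T s x)) := rfl
  rw [hfn]
  convert h3 using 1
  case e'_4 => rfl
  case e'_5 => rfl
  case e'_8 => rfl
  simp only [neg_sq]
  ring

/-- The Black–Scholes European put value satisfies the Black–Scholes PDE
`∂_t V_E + (1/2)σ²x²∂²ₓₓV_E + ρx∂ₓV_E − ρV_E = 0` on `[0,T) × (0,∞)`. -/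
theorem stmt_9 (ρ σ Γ T : ℝ) (hσ : 0 < σ) (hΓ : 0 < Γ) (hT : 0 < T)
    (t x : ℝ) (ht : t ∈ Set.Ico (0 : ℝ) T) (hx : 0 < x) :
    deriv (fun s => euroPut ρ σ Γ T s x) t
      + (1 / 2) * σ ^ 2 * x ^ 2 * deriv (deriv (fun y => euroPut ρ σ Γ T t y)) x
      + ρ * x * deriv (fun y => euroPut ρ σ Γ T t y) x
      - ρ * euroPut ρ σ Γ T t x = 0 := by
  obtain ⟨ht0, htT⟩ := ht
  have hτ : 0 < T - t := sub_pos.2 htT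
  have hq0 : 0 < Real.sqrt (T - t) := Real.sqrt_pos.2 hτ
  have h1 := (hasDerivAt_euroPut_time ρ σ Γ T t x hσ hΓ hτ hx).deriv
  have h2 := (hasDerivAt_euroPut_space ρ σ Γ T t x hσ hΓ hτ hx).deriv
  have hD2 : deriv (deriv (fun y => euroPut ρ σ Γ T t y)) x
      = (Real.sqrt (2 * Real.pi))⁻¹ * Real.exp (-(dPlus ρ σ Γ T t x) ^ 2 / 2)
          * (1 / x / (σ * Real.sqrt (T - t))) := by
    have hev : deriv (fun y => euroPut ρ σ Γ T t y)
        =ᶠ[nhds x] fun y => -stdNormCDF (-(dPlus ρ σ Γ T t y)) := by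
      filter_upwards [Ioi_mem_nhds hx] with y hy
      exact (hasDerivAt_euroPut_space ρ σ Γ T t y hσ hΓ hτ hy).deriv
    rw [hev.deriv_eq]
    have hg : HasDerivAt (fun y => -stdNormCDF (-(dPlus ρ σ Γ T t y)))
        (-((Real.sqrt (2 * Real.pi))⁻¹ * Real.exp (-(-(dPlus ρ σ Γ T t x)) ^ 2 / 2)
          * (-(1 / x / (σ * Real.sqrt (T - t)))))) x :=
      (((hasDerivAt_stdNormCDF _).comp x (hasDerivAt_dPlus_space ρ σ Γ T t x hΓ hx).neg)).neg
    rw [hg.deriv]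
    simp only [neg_sq]; ring
  rw [h1, h2, hD2]
  have key := key_identity ρ σ Γ T t x hσ hΓ hτ hx
  simp only [euroPut]
  set q := Real.sqrt (T - t) with hqdef
  have hq2 : q ^ 2 = T - t := Real.sq_sqrt hτ.le
  rw [← hq2] at key ⊢
  have hM : Real.exp (-(dMinus ρ σ Γ T t x) ^ 2 / 2)
      = x * Real.exp (-(dPlus ρ σ Γ T t x) ^ 2 / 2) / (Γ * Real.exp (-ρ * q ^ 2)) := by
    rw [eq_div_iff (by positivity)]
    linear_combination key
  rw [hM]
  have hE : Real.exp (-ρ * q ^ 2) ≠ 0 := Real.exp_ne_zero _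
  field_simp
  ring
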